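/- Let F(v) = (a·v + √Q·b)²/(σ² + a²(P − v²)) and suppose F(0) < ρ ≤ F(√P). Then v₂* = (√A − √Q·b)/(a(1+ρ)), with A = Pρ(1+ρ)a² + ρ(1+ρ)σ² − ρQb², is the minimum of the set {v : 0 ≤ v ≤ √P, F(v) ≥ ρ}, and the maximum of P − v² over this set equals P − v₂*². -/

import Mathlib

set_option maxHeartbeats 1600000 in
/-- When `F(0) < ρ ≤ F(√P)`, the closed-form `v₂*` is the least element of the
feasible set `{v : 0 ≤ v ≤ √P, F(v) ≥ ρ}`, and `P − v₂*²` is the greatest value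
of `P − v²` over this set. -/
theorem stmt_10 (a b P Q σ2 ρ : ℝ) (ha : 0 < a) (hb : 0 < b) (hP : 0 < P)
    (hQ : 0 < Q) (hσ : 0 < σ2) (hρ : 0 < ρ)
    (F : ℝ → ℝ) (A v2star : ℝ)
    (hF : ∀ v : ℝ, F v =
      (a * v + Real.sqrt Q * b) ^ 2 / (σ2 + a ^ 2 * (P - v ^ 2)))
    (hlow : F 0 < ρ) (hhigh : ρ ≤ F (Real.sqrt P))
    (hA : A = P * ρ * (1 + ρ) * a ^ 2 + ρ * (1 + ρ) * σ2 - ρ * Q * b ^ 2)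
    (hv2 : v2star = (Real.sqrt A - Real.sqrt Q * b) / (a * (1 + ρ))) :
    IsLeast {v : ℝ | 0 ≤ v ∧ v ≤ Real.sqrt P ∧ F v ≥ ρ} v2star ∧
    IsGreatest ((fun v => P - v ^ 2) ''
      {v : ℝ | 0 ≤ v ∧ v ≤ Real.sqrt P ∧ F v ≥ ρ}) (P - v2star ^ 2) := by
  have hsQ : 0 < Real.sqrt Q := Real.sqrt_pos.mpr hQ
  have hQ2 : Real.sqrt Q ^ 2 = Q := Real.sq_sqrt hQ.le
  have hP2 : Real.sqrt P ^ 2 = P := Real.sq_sqrt hP.le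
  have hsP : 0 < Real.sqrt P := Real.sqrt_pos.mpr hP
  have hρ1 : 0 < 1 + ρ := by linarith
  have hd0 : (0:ℝ) < σ2 + a ^ 2 * (P - 0 ^ 2) := by nlinarith [sq_nonneg a]
  have hlow' : Q * b ^ 2 < ρ * (σ2 + a ^ 2 * P) := by
    rw [hF 0, div_lt_iff₀ hd0] at hlow
    nlinarith
  have hA0 : 0 < A := by nlinarith
  have hA2 : Real.sqrt A ^ 2 = A := Real.sq_sqrt hA0.le
  have hsA : 0 < Real.sqrt A := Real.sqrt_pos.mpr hA0
  have hkey : a * (1 + ρ) * v2star + Real.sqrt Q * b = Real.sqrt A := by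
    rw [hv2]; field_simp; ring
  -- the key algebraic identity
  have hid : ∀ v : ℝ, (a * (1 + ρ) * v + Real.sqrt Q * b) ^ 2 - A =
      (1 + ρ) * ((a * v + Real.sqrt Q * b) ^ 2 - ρ * (σ2 + a ^ 2 * (P - v ^ 2))) := by
    intro v
    linear_combination (-1 : ℝ) * hA - ρ * b ^ 2 * hQ2
  have hchar : ∀ v, 0 ≤ v → v ≤ Real.sqrt P →
      (F v ≥ ρ ↔ Real.sqrt A ≤ a * (1 + ρ) * v + Real.sqrt Q * b) := by
    intro v hv0 hvP
    have hv2P : v ^ 2 ≤ P := by nlinarith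
    have hD : 0 < σ2 + a ^ 2 * (P - v ^ 2) := by nlinarith [sq_nonneg a]
    rw [hF v, ge_iff_le, le_div_iff₀ hD]
    have hid' := hid v
    constructor
    · intro h
      have hg : 0 ≤ (1 + ρ) * ((a * v + Real.sqrt Q * b) ^ 2 -
          ρ * (σ2 + a ^ 2 * (P - v ^ 2))) :=
        mul_nonneg hρ1.le (by linarith)
      have hsq : A ≤ (a * (1 + ρ) * v + Real.sqrt Q * b) ^ 2 := by linarith
      calc Real.sqrt A ≤ Real.sqrt ((a * (1 + ρ) * v + Real.sqrt Q * b) ^ 2) :=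
            Real.sqrt_le_sqrt hsq
        _ = a * (1 + ρ) * v + Real.sqrt Q * b := by
            rw [Real.sqrt_sq (by positivity)]
    · intro h
      have hsq : A ≤ (a * (1 + ρ) * v + Real.sqrt Q * b) ^ 2 := by
        calc A = Real.sqrt A ^ 2 := hA2.symm
          _ ≤ (a * (1 + ρ) * v + Real.sqrt Q * b) ^ 2 :=
              pow_le_pow_left₀ hsA.le h 2
      by_contra hc
      push_neg at hc
      have : (1 + ρ) * ((a * v + Real.sqrt Q * b) ^ 2 -
          ρ * (σ2 + a ^ 2 * (P - v ^ 2))) < 0 :=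
        mul_neg_of_pos_of_neg hρ1 (by linarith)
      linarith
  -- v2star is feasible
  have hAb : Real.sqrt Q * b < Real.sqrt A := by
    have h1 : (Real.sqrt Q * b) ^ 2 < Real.sqrt A ^ 2 := by
      nlinarith [mul_lt_mul_of_pos_left hlow' hρ1]
    exact lt_of_pow_lt_pow_left₀ 2 hsA.le h1
  have hv0 : 0 ≤ v2star := by
    rw [hv2]
    apply div_nonneg (by linarith) (by positivity)
  have hvP : v2star ≤ Real.sqrt P := by
    have h1 : F (Real.sqrt P) ≥ ρ := hhigh
    rw [hchar _ hsP.le le_rfl] at h1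
    have h2 : a * (1 + ρ) * v2star ≤ a * (1 + ρ) * Real.sqrt P := by linarith
    exact le_of_mul_le_mul_left h2 (mul_pos ha hρ1)
  have hmem : v2star ∈ {v : ℝ | 0 ≤ v ∧ v ≤ Real.sqrt P ∧ F v ≥ ρ} := by
    refine ⟨hv0, hvP, ?_⟩
    rw [hchar _ hv0 hvP, hkey]
  have hlb : ∀ v ∈ {v : ℝ | 0 ≤ v ∧ v ≤ Real.sqrt P ∧ F v ≥ ρ}, v2star ≤ v := by
    rintro v ⟨h0, hpv, hf⟩
    rw [hchar v h0 hpv] at hf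
    have h2 : a * (1 + ρ) * v2star ≤ a * (1 + ρ) * v := by linarith
    exact le_of_mul_le_mul_left h2 (mul_pos ha hρ1)
  refine ⟨⟨hmem, hlb⟩, ⟨v2star, hmem, rfl⟩, ?_⟩
  rintro y ⟨v, hv, rfl⟩
  have h1 := hlb v hv
  simp only
  nlinarith [hv.1]
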